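/- arXiv:1905.11505 — 2 statements merged into one kernel-verified Lean document; each statement's English description precedes it below -/
import Mathlib

section
/- (Corollary 1, Kolmogorov–Smirnov version.) Let r be a probability measure on a measurable parameter space Θ and D ⊆ Θ a measurable set with w := r(D) > 0 (Assumption 1). For each n ∈ ℕ, let κ_n be a Markov kernel from Θ to [0,1] such that κ_n(θ) is the uniform distribution on [0,1] for every θ ∉ D, and for every θ ∈ D and every ε > 0, κ_n(θ)([0,ε]) → 1 as n → ∞ (Assumption 2: local p-values are uniform under correct specification and converge to 0 in probability under misspecification). For B, n ∈ ℕ, let θ_1,…,θ_B be i.i.d. with law r and, conditionally on them, let p_1,…,p_B be independent with p_i ∼ κ_n(θ_i); let S_{B,n} = sup_{t∈[0,1]} |F̂_B(t) − t| be the Kolmogorov–Smirnov statistic of the p-values, and let c_B(α) be the (1−α)-quantile of the KS statistic computed from B i.i.d. Unif[0,1] variables. Then for every α ∈ (0,1) and all sequences B_k → ∞ and n_k → ∞, P(S_{B_k,n_k} > c_{B_k}(α)) → 1 as k → ∞; that is, the α-level global goodness-of-fit test based on the Kolmogorov–Smirnov statistic is statistically consistent. -/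
open MeasureTheory Filter
open scoped ENNReal Classical

/-- Empirical cumulative distribution function of the first `B` of the random
variables `X` evaluated at the sample point `ω` and the argument `t`:
`F̂_B(t) = (1/B) · #{ i < B : X i ω ≤ t }`. -/
noncomputable def ecdf {Ω : Type*} (X : ℕ → Ω → ℝ) (B : ℕ) (ω : Ω) (t : ℝ) : ℝ :=
  ((Finset.range B).filter (fun i => X i ω ≤ t)).card / B

/-- The Kolmogorov–Smirnov statistic against the uniform distribution on `[0,1]`
computed from the first `B` of the random variables `X`:
`S_B = sup_{t ∈ [0,1]} |F̂_B(t) - t|`. -/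
noncomputable def ksStat {Ω : Type*} (X : ℕ → Ω → ℝ) (B : ℕ) (ω : Ω) : ℝ :=
  ⨆ t : Set.Icc (0 : ℝ) 1, |ecdf X B ω ↑t - ↑t|

open ProbabilityTheory

set_option linter.unusedSectionVars false
set_option linter.unusedVariables false

section basic
variable {Ω : Type*} (X : ℕ → Ω → ℝ) (B : ℕ) (ω : Ω)

lemma ecdf_nonneg (t : ℝ) : 0 ≤ ecdf X B ω t := by
  unfold ecdf; positivity

lemma ecdf_le_one (t : ℝ) : ecdf X B ω t ≤ 1 := by
  unfold ecdf
  rcases Nat.eq_zero_or_pos B with h | h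
  · simp [h]
  · rw [div_le_one (by positivity)]
    exact_mod_cast (Finset.card_filter_le _ _).trans_eq (Finset.card_range B)

lemma ecdf_mono (ω : Ω) {s t : ℝ} (h : s ≤ t) : ecdf X B ω s ≤ ecdf X B ω t := by
  unfold ecdf
  have hsub : (Finset.range B).filter (fun i => X i ω ≤ s) ⊆
      (Finset.range B).filter (fun i => X i ω ≤ t) :=
    Finset.monotone_filter_right _ (fun i _ hi => le_trans hi h)
  gcongr

lemma abs_ecdf_sub_le_one {t : ℝ} (ht : t ∈ Set.Icc (0:ℝ) 1) : |ecdf X B ω t - t| ≤ 1 := by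
  rw [abs_le]
  constructor
  · have := ecdf_nonneg X B ω t; linarith [ht.2]
  · have := ecdf_le_one X B ω t; linarith [ht.1]

lemma bddAbove_ks : BddAbove (Set.range fun t : Set.Icc (0:ℝ) 1 => |ecdf X B ω ↑t - ↑t|) := by
  refine ⟨1, ?_⟩
  rintro x ⟨t, rfl⟩
  exact abs_ecdf_sub_le_one X B ω t.2

lemma le_ksStat {t : ℝ} (ht : t ∈ Set.Icc (0:ℝ) 1) : |ecdf X B ω t - t| ≤ ksStat X B ω :=
  le_ciSup (bddAbove_ks X B ω) (⟨t, ht⟩ : Set.Icc (0:ℝ) 1)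

lemma ksStat_nonneg : 0 ≤ ksStat X B ω := by
  have := le_ksStat X B ω (t := 0) (by simp)
  have := abs_nonneg (ecdf X B ω 0 - 0)
  linarith

lemma ksStat_le {M : ℝ} (h : ∀ t ∈ Set.Icc (0:ℝ) 1, |ecdf X B ω t - t| ≤ M) :
    ksStat X B ω ≤ M :=
  ciSup_le fun t => h t t.2

end basic

section cheb
variable {Ω : Type*} [MeasurableSpace Ω] {μ : Measure Ω} [IsProbabilityMeasure μ]
  {X : ℕ → Ω → ℝ}

/-- indicator summand -/
noncomputable def indY (X : ℕ → Ω → ℝ) (t : ℝ) (i : ℕ) (ω : Ω) : ℝ :=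
  if X i ω ≤ t then 1 else 0

lemma ecdf_eq_sum (B : ℕ) (t : ℝ) (ω : Ω) :
    ecdf X B ω t = (∑ i ∈ Finset.range B, indY X t i ω) / B := by
  unfold ecdf indY
  rw [Finset.card_filter]
  push_cast
  rfl

lemma indY_measurable (hm : ∀ i, Measurable (X i)) (t : ℝ) (i : ℕ) :
    Measurable (indY X t i) := by
  unfold indY
  exact Measurable.ite (measurableSet_le (hm i) measurable_const)
    measurable_const measurable_const

lemma ecdf_measurable (hm : ∀ i, Measurable (X i)) (B : ℕ) (t : ℝ) :
    Measurable (fun ω => ecdf X B ω t) := by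
  simp only [ecdf_eq_sum]
  exact (Finset.measurable_sum _ fun i _ => indY_measurable hm t i).div_const _

lemma indY_mem (t : ℝ) (i : ℕ) (ω : Ω) : indY X t i ω ∈ Set.Icc (0:ℝ) 1 := by
  unfold indY; split <;> simp

lemma indY_memℒp (hm : ∀ i, Measurable (X i)) (t : ℝ) (i : ℕ) :
    MemLp (indY X t i) 2 μ :=
  memLp_of_bounded (ae_of_all μ (indY_mem t i)) (indY_measurable hm t i).aestronglyMeasurable 2

lemma indY_integral (hm : ∀ i, Measurable (X i)) (t : ℝ) (i : ℕ) :
    ∫ ω, indY X t i ω ∂μ = ((μ.map (X i)) (Set.Iic t)).toReal := by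
  have : indY X t i = Set.indicator (X i ⁻¹' Set.Iic t) (fun _ => (1:ℝ)) := by
    funext ω
    simp [indY, Set.indicator_apply, Set.mem_preimage, Set.mem_Iic]
  rw [this, integral_indicator_const _ ((hm i) measurableSet_Iic),
    Measure.map_apply (hm i) measurableSet_Iic]
  simp
  rfl

lemma indY_indep (hind : ProbabilityTheory.iIndepFun X μ)
    (hm : ∀ i, Measurable (X i)) (t : ℝ) :
    Set.Pairwise ↑(Finset.range B) fun i j => ProbabilityTheory.IndepFun (indY X t i) (indY X t j) μ := by
  intro i _ j _ hij
  have hφ : Measurable (fun x : ℝ => if x ≤ t then (1:ℝ) else 0) :=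
    Measurable.ite measurableSet_Iic measurable_const measurable_const
  exact (hind.indepFun hij).comp hφ hφ

/-- Chebyshev concentration for the empirical CDF. -/
lemma ecdf_concentration (hm : ∀ i, Measurable (X i))
    (hind : ProbabilityTheory.iIndepFun X μ)
    (ν : Measure ℝ) (hlaw : ∀ i, μ.map (X i) = ν)
    (t δ : ℝ) (hδ : 0 < δ) (B : ℕ) (hB : 1 ≤ B) :
    μ {ω | δ ≤ |ecdf X B ω t - (ν (Set.Iic t)).toReal|} ≤ ENNReal.ofReal (1 / (B * δ^2)) := by
  set q : ℝ := (ν (Set.Iic t)).toReal with hq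
  set S : Ω → ℝ := ∑ i ∈ Finset.range B, indY X t i with hS
  have hSapp : ∀ ω, S ω = ∑ i ∈ Finset.range B, indY X t i ω := by
    intro ω; rw [hS]; simp
  have hSmem : MemLp S 2 μ := memLp_finset_sum' _ (fun i _ => indY_memℒp hm t i)
  have hES : ∫ ω, S ω ∂μ = B * q := by
    simp_rw [hSapp]
    rw [integral_finset_sum _ (fun i _ => ((indY_memℒp hm t i).integrable (by norm_num)))]
    simp_rw [indY_integral hm t, hlaw]
    simp [mul_comm]
    exact Or.inl rfl
  have hVar : variance S μ ≤ B * (1/4) := by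
    rw [hS, IndepFun.variance_sum (fun i _ => indY_memℒp hm t i) (indY_indep hind hm t)]
    have h4 : ∀ i ∈ Finset.range B, variance (indY X t i) μ ≤ 1/4 := by
      intro i _
      have := variance_le_sq_of_bounded (μ := μ) (a := 0) (b := 1)
        (ae_of_all μ (indY_mem t i)) (indY_measurable hm t i).aemeasurable
      norm_num at this
      linarith
    calc ∑ i ∈ Finset.range B, variance (indY X t i) μ
        ≤ ∑ _i ∈ Finset.range B, (1/4 : ℝ) := Finset.sum_le_sum h4
      _ = B * (1/4) := by simp [mul_comm]
  have hBpos : (0:ℝ) < B := by exact_mod_cast hB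
  have hcheb := meas_ge_le_variance_div_sq (μ := μ) hSmem
    (c := B * δ) (by positivity)
  have hsub : {ω | δ ≤ |ecdf X B ω t - q|} ⊆ {ω | B * δ ≤ |S ω - ∫ ω, S ω ∂μ|} := by
    intro ω hω
    simp only [Set.mem_setOf_eq] at hω ⊢
    rw [hES]
    have : ecdf X B ω t = S ω / B := by rw [ecdf_eq_sum, hSapp]
    rw [this] at hω
    have : |S ω / B - q| = |S ω - B * q| / B := by
      rw [← abs_of_pos hBpos, ← abs_div]
      congr 1
      field_simp
      rw [abs_of_pos hBpos]; ring
    rw [this, le_div_iff₀ hBpos] at hω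
    linarith [hω]
  calc μ {ω | δ ≤ |ecdf X B ω t - q|}
      ≤ μ {ω | B * δ ≤ |S ω - ∫ ω, S ω ∂μ|} := measure_mono hsub
    _ ≤ ENNReal.ofReal (variance S μ / (B * δ)^2) := hcheb
    _ ≤ ENNReal.ofReal (1 / (B * δ^2)) := by
        apply ENNReal.ofReal_le_ofReal
        rw [div_le_div_iff₀ (by positivity) (by positivity)]
        have hδ2 : (0:ℝ) < δ^2 := by positivity
        nlinarith [hVar, mul_pos hBpos hδ2]

end cheb

lemma ksStat_le_grid {Ω : Type*} (X : ℕ → Ω → ℝ) (B : ℕ) (ω : Ω) (m : ℕ) (hm : 1 ≤ m)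
    {δ : ℝ} (h : ∀ j ≤ m, |ecdf X B ω ((j:ℝ)/m) - (j:ℝ)/m| ≤ δ) :
    ksStat X B ω ≤ δ + 1/m := by
  have hmR : (0:ℝ) < m := by exact_mod_cast hm
  apply ksStat_le
  intro t ht
  obtain ⟨ht0, ht1⟩ := ht
  set j : ℕ := ⌊t * m⌋₊ with hj
  have htm0 : 0 ≤ t * m := by positivity
  have hjle : (j:ℝ) ≤ t * m := Nat.floor_le htm0
  have hjlt : t * m < j + 1 := Nat.lt_floor_add_one _
  have hjm : j ≤ m := by
    have : t * m ≤ (m:ℝ) := by nlinarith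
    calc j = ⌊t * m⌋₊ := hj
      _ ≤ ⌊(m:ℝ)⌋₊ := Nat.floor_mono this
      _ = m := Nat.floor_natCast m
  rcases eq_or_lt_of_le hjm with hEq | hLt
  · -- j = m, so t = 1
    have ht1' : t = 1 := by
      have : (m:ℝ) ≤ t * m := by rw [hEq] at hjle; exact_mod_cast hjle
      nlinarith
    have := h m le_rfl
    rw [div_self hmR.ne'] at this
    rw [ht1']
    have h1m : 0 < 1/(m:ℝ) := by positivity
    linarith
  · have h1 := h j hLt.le
    have h2 := h (j+1) hLt
    push_cast at h2
    set a : ℝ := (j:ℝ)/m with ha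
    set b : ℝ := ((j:ℝ)+1)/m with hb
    have hat : a ≤ t := by rw [ha, div_le_iff₀ hmR]; linarith
    have htb : t ≤ b := by rw [hb, le_div_iff₀ hmR]; linarith
    have hba : b - a = 1/m := by rw [ha, hb]; field_simp; ring
    have e1 : ecdf X B ω t ≤ ecdf X B ω b := ecdf_mono X B ω htb
    have e2 : ecdf X B ω a ≤ ecdf X B ω t := ecdf_mono X B ω hat
    rw [abs_le] at h1 h2 ⊢
    constructor <;> [skip; skip] <;> [linarith [h1.1, h1.2, h2.1, h2.2]; linarith [h1.1, h1.2, h2.1, h2.2]]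

lemma unif_Iic {x : ℝ} (hx : x ∈ Set.Icc (0:ℝ) 1) :
    ((volume.restrict (Set.Icc (0:ℝ) 1)) (Set.Iic x)).toReal = x := by
  rw [Measure.restrict_apply measurableSet_Iic]
  have : Set.Iic x ∩ Set.Icc (0:ℝ) 1 = Set.Icc 0 x := by
    ext y
    simp only [Set.mem_inter_iff, Set.mem_Iic, Set.mem_Icc]
    constructor
    · rintro ⟨h1, h2, h3⟩; exact ⟨h2, h1⟩
    · rintro ⟨h1, h2⟩; exact ⟨h2, h1, h2.trans hx.2⟩
  rw [this, Real.volume_Icc, ENNReal.toReal_ofReal (by linarith [hx.1]), sub_zero]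

/-- Null side: the measure of `{ksStat ≤ 2/m}` under iid uniforms is at least `1 - α`
once `B` is large. -/
lemma null_quantile_bound {Ω' : Type*} [MeasurableSpace Ω'] (μ' : Measure Ω')
    [IsProbabilityMeasure μ'] (U : ℕ → Ω' → ℝ) (hUmeas : ∀ i, Measurable (U i))
    (hUindep : ProbabilityTheory.iIndepFun U μ')
    (hUlaw : ∀ i, μ'.map (U i) = volume.restrict (Set.Icc (0 : ℝ) 1))
    {α : ℝ} (hα : 0 < α) (m B : ℕ) (hm : 1 ≤ m) (hB : 1 ≤ B)
    (hBm : ((m:ℝ)+1) * m^2 / B ≤ α) :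
    ENNReal.ofReal (1 - α) ≤ μ' {ω' | ksStat U B ω' ≤ 2/m} := by
  have hmR : (0:ℝ) < m := by exact_mod_cast hm
  set bad : ℕ → Set Ω' := fun j => {ω' | (1:ℝ)/m ≤ |ecdf U B ω' ((j:ℝ)/m) - (j:ℝ)/m|} with hbad
  have hbadmeas : ∀ j, MeasurableSet (bad j) := by
    intro j
    exact measurableSet_le measurable_const
      (((ecdf_measurable hUmeas B _).sub measurable_const).abs)
  have hbadle : ∀ j ≤ m, μ' (bad j) ≤ ENNReal.ofReal ((m:ℝ)^2 / B) := by
    intro j hj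
    have hq : ((volume.restrict (Set.Icc (0:ℝ) 1)) (Set.Iic ((j:ℝ)/m))).toReal = (j:ℝ)/m :=
      unif_Iic ⟨by positivity, by rw [div_le_one hmR]; exact_mod_cast hj⟩
    have := ecdf_concentration hUmeas hUindep _ hUlaw ((j:ℝ)/m) (1/m) (by positivity) B hB
    rw [hq] at this
    refine this.trans (le_of_eq ?_)
    congr 1
    field_simp
  set E : Set Ω' := ⋃ j ∈ Finset.range (m+1), bad j with hE
  have hEmeas : MeasurableSet E := Finset.measurableSet_biUnion _ (fun j _ => hbadmeas j)
  have hEle : μ' E ≤ ENNReal.ofReal α := by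
    calc μ' E ≤ ∑ j ∈ Finset.range (m+1), μ' (bad j) := measure_biUnion_finset_le _ _
      _ ≤ ∑ _j ∈ Finset.range (m+1), ENNReal.ofReal ((m:ℝ)^2 / B) :=
          Finset.sum_le_sum (fun j hj => hbadle j (by
            have := Finset.mem_range.1 hj; omega))
      _ = (m+1) * ENNReal.ofReal ((m:ℝ)^2 / B) := by
          rw [Finset.sum_const, Finset.card_range]; simp [nsmul_eq_mul]
      _ = ENNReal.ofReal (((m:ℝ)+1) * ((m:ℝ)^2 / B)) := by
          rw [ENNReal.ofReal_mul (by positivity)]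
          congr 1
          rw [ENNReal.ofReal_add (by positivity) zero_le_one]
          simp [ENNReal.ofReal_natCast]
      _ ≤ ENNReal.ofReal α := by
          apply ENNReal.ofReal_le_ofReal
          rw [mul_div_assoc] at hBm
          exact hBm
  have hsub : Eᶜ ⊆ {ω' | ksStat U B ω' ≤ 2/m} := by
    intro ω hω
    simp only [hE, Set.compl_iUnion, Set.mem_iInter] at hω
    have : ∀ j ≤ m, |ecdf U B ω ((j:ℝ)/m) - (j:ℝ)/m| ≤ 1/m := by
      intro j hj
      have := hω j (Finset.mem_range.2 (by omega))
      simp only [hbad, Set.mem_compl_iff, Set.mem_setOf_eq, not_le] at this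
      linarith
    have hgrid := ksStat_le_grid U B ω m hm this
    simp only [Set.mem_setOf_eq]
    calc ksStat U B ω ≤ 1/m + 1/m := hgrid
      _ = 2/m := by ring
  calc ENNReal.ofReal (1 - α) ≤ 1 - ENNReal.ofReal α := by
        rw [← ENNReal.ofReal_one, ← ENNReal.ofReal_sub _ hα.le]
      _ ≤ 1 - μ' E := by
        exact tsub_le_tsub_left hEle 1
      _ = μ' Eᶜ := by
        rw [measure_compl hEmeas (measure_ne_top _ _)]
        simp
      _ ≤ μ' {ω' | ksStat U B ω' ≤ 2/m} := measure_mono hsub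

lemma mixture_Iic_eventually {Θ : Type*} [MeasurableSpace Θ] (r : Measure Θ)
    [IsProbabilityMeasure r] (D : Set Θ) (hD : MeasurableSet D)
    (κ : ℕ → ProbabilityTheory.Kernel Θ ℝ)
    (halt : ∀ θ ∈ D, ∀ ε > (0 : ℝ),
      Tendsto (fun n => (κ n) θ (Set.Icc (0 : ℝ) ε)) atTop (nhds 1))
    {ε : ℝ} (hε : 0 < ε) {β : ℝ≥0∞} (hβ : β < r D) :
    ∀ᶠ n in atTop, β < (r.bind (fun θ => (κ n) θ)) (Set.Iic ε) := by
  have hmeas : ∀ n, Measurable (fun θ => (κ n) θ (Set.Icc (0:ℝ) ε)) :=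
    fun n => (κ n).measurable_coe measurableSet_Icc
  have hlower : ∀ n, ∫⁻ θ in D, (κ n) θ (Set.Icc (0:ℝ) ε) ∂r
      ≤ (r.bind (fun θ => (κ n) θ)) (Set.Iic ε) := by
    intro n
    rw [Measure.bind_apply measurableSet_Iic ((κ n).measurable.aemeasurable)]
    calc ∫⁻ θ in D, (κ n) θ (Set.Icc (0:ℝ) ε) ∂r
        ≤ ∫⁻ θ in D, (κ n) θ (Set.Iic ε) ∂r :=
          lintegral_mono (fun θ => measure_mono Set.Icc_subset_Iic_self)
      _ ≤ ∫⁻ θ, (κ n) θ (Set.Iic ε) ∂r := setLIntegral_le_lintegral _ _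
  have hliminf : r D ≤ atTop.liminf (fun n => ∫⁻ θ in D, (κ n) θ (Set.Icc (0:ℝ) ε) ∂r) := by
    have := lintegral_liminf_le (μ := r.restrict D) (u := atTop)
      (f := fun n θ => (κ n) θ (Set.Icc (0:ℝ) ε)) hmeas
    refine le_trans ?_ this
    have heq : ∫⁻ θ in D, atTop.liminf (fun n => (κ n) θ (Set.Icc (0:ℝ) ε)) ∂r
        = ∫⁻ θ in D, 1 ∂r := by
      apply setLIntegral_congr_fun hD
      intro θ hθ
      exact (halt θ hθ ε hε).liminf_eq
    rw [heq]
    simp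
  have : β < atTop.liminf (fun n => (r.bind (fun θ => (κ n) θ)) (Set.Iic ε)) :=
    lt_of_lt_of_le (lt_of_lt_of_le hβ hliminf) (liminf_le_liminf (Eventually.of_forall hlower))
  exact eventually_lt_of_lt_liminf this

/-- **Corollary 1, Kolmogorov–Smirnov version: consistency of the global test.** -/
theorem global_ks_test_consistent
    {Θ : Type*} [MeasurableSpace Θ] (r : Measure Θ) [IsProbabilityMeasure r]
    (D : Set Θ) (hD : MeasurableSet D) (hw : 0 < r D)
    (κ : ℕ → ProbabilityTheory.Kernel Θ ℝ)
    (hκ : ∀ n, ProbabilityTheory.IsMarkovKernel (κ n))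
    (hnull : ∀ n, ∀ θ ∉ D, (κ n) θ = volume.restrict (Set.Icc (0 : ℝ) 1))
    (halt : ∀ θ ∈ D, ∀ ε > (0 : ℝ),
      Tendsto (fun n => (κ n) θ (Set.Icc (0 : ℝ) ε)) atTop (nhds 1))
    {Ω : Type*} [MeasurableSpace Ω] (μ : Measure Ω) [IsProbabilityMeasure μ]
    (p : ℕ → ℕ → Ω → ℝ) (hpmeas : ∀ n i, Measurable (p n i))
    (hpindep : ∀ n, ProbabilityTheory.iIndepFun (p n) μ)
    (hplaw : ∀ n i, μ.map (p n i) = r.bind (fun θ => (κ n) θ))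
    {Ω' : Type*} [MeasurableSpace Ω'] (μ' : Measure Ω') [IsProbabilityMeasure μ']
    (U : ℕ → Ω' → ℝ) (hUmeas : ∀ i, Measurable (U i))
    (hUindep : ProbabilityTheory.iIndepFun U μ')
    (hUlaw : ∀ i, μ'.map (U i) = volume.restrict (Set.Icc (0 : ℝ) 1))
    (α : ℝ) (hα : α ∈ Set.Ioo (0 : ℝ) 1)
    (c : ℕ → ℝ)
    (hc : ∀ B, c B = sInf {t : ℝ | 1 - α ≤ (μ' {ω' | ksStat U B ω' ≤ t}).toReal})
    (Bk nk : ℕ → ℕ) (hBk : Tendsto Bk atTop atTop) (hnk : Tendsto nk atTop atTop) :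
    Tendsto (fun j => μ {ω | c (Bk j) < ksStat (p (nk j)) (Bk j) ω}) atTop
      (nhds 1) := by
  obtain ⟨hα0, hα1⟩ := hα
  set w : ℝ := (r D).toReal with hwdef
  have hrD1 : r D ≤ 1 := prob_le_one
  have hrDne : r D ≠ ⊤ := (hrD1.trans_lt ENNReal.one_lt_top).ne
  have hw0 : 0 < w := ENNReal.toReal_pos hw.ne' hrDne
  have hw1 : w ≤ 1 := by
    rw [hwdef, ← ENNReal.toReal_one]
    exact ENNReal.toReal_mono ENNReal.one_ne_top hrD1
  set δ : ℝ := w/8 with hδdef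
  have hδ0 : 0 < δ := by positivity
  set m : ℕ := ⌈(8:ℝ)/w⌉₊ with hmdef
  have hm1 : 1 ≤ m := Nat.ceil_pos.mpr (by positivity)
  have hmR : (0:ℝ) < m := by exact_mod_cast hm1
  have h2m : 2/(m:ℝ) ≤ w/4 := by
    have hcl : (8:ℝ)/w ≤ m := Nat.le_ceil _
    rw [div_le_div_iff₀ hmR (by norm_num : (0:ℝ) < 4)]
    rw [div_le_iff₀ hw0] at hcl
    nlinarith
  -- eventual null-side bound on the quantile
  set N : ℕ := max 1 ⌈((m:ℝ)+1) * m^2 / α⌉₊ with hNdef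
  have hcB : ∀ B : ℕ, N ≤ B → c B ≤ 2/m := by
    intro B hNB
    have hB1 : 1 ≤ B := le_trans (le_max_left _ _) hNB
    have hBm : ((m:ℝ)+1) * m^2 / B ≤ α := by
      have h1 : (((m:ℝ)+1) * m^2 / α) ≤ (⌈((m:ℝ)+1) * m^2 / α⌉₊ : ℝ) := Nat.le_ceil _
      have h2 : ((⌈((m:ℝ)+1) * m^2 / α⌉₊ : ℕ) : ℝ) ≤ B := by
        exact_mod_cast le_trans (le_max_right _ _) hNB
      have hBpos : (0:ℝ) < B := by positivity
      rw [div_le_iff₀ hBpos]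
      rw [div_le_iff₀ hα0] at h1
      nlinarith
    have hmem : (2:ℝ)/m ∈ {t : ℝ | 1 - α ≤ (μ' {ω' | ksStat U B ω' ≤ t}).toReal} := by
      have h := null_quantile_bound μ' U hUmeas hUindep hUlaw hα0 m B hm1 hB1 hBm
      have := ENNReal.toReal_mono (measure_ne_top _ _) h
      rwa [ENNReal.toReal_ofReal (by linarith)] at this
    have hbdd : BddBelow {t : ℝ | 1 - α ≤ (μ' {ω' | ksStat U B ω' ≤ t}).toReal} := by
      refine ⟨0, fun t ht => ?_⟩
      by_contra hneg
      push_neg at hneg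
      have hempty : {ω' | ksStat U B ω' ≤ t} = ∅ := by
        ext ω'
        simp only [Set.mem_setOf_eq, Set.mem_empty_iff_false, iff_false, not_le]
        exact lt_of_lt_of_le hneg (ksStat_nonneg U B ω')
      simp only [Set.mem_setOf_eq] at ht
      rw [hempty] at ht
      simp only [measure_empty, ENNReal.toReal_zero] at ht
      linarith
    rw [hc B]
    exact csInf_le hbdd hmem
  -- eventual alternative-side bound for the mixture law
  have hβlt : ENNReal.ofReal (3*w/4) < r D := by
    rw [← ENNReal.ofReal_toReal hrDne]
    exact ENNReal.ofReal_lt_ofReal_iff hw0 |>.2 (by linarith)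
  have hmix := mixture_Iic_eventually r D hD κ halt (ε := w/8) (by positivity) hβlt
  -- the lower bound sequence
  set L : ℕ → ℝ≥0∞ := fun j => 1 - ENNReal.ofReal (1 / (Bk j * δ^2)) with hL
  have hLlim : Tendsto L atTop (nhds 1) := by
    have hreal : Tendsto (fun j => 1 / ((Bk j : ℝ) * δ^2)) atTop (nhds 0) := by
      simp only [one_div]
      exact (((tendsto_natCast_atTop_atTop (R := ℝ)).comp hBk).atTop_mul_const
        (by positivity)).inv_tendsto_atTop
    have h0 : Tendsto (fun j => ENNReal.ofReal (1 / ((Bk j : ℝ) * δ^2))) atTop (nhds 0) := by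
      rw [← ENNReal.ofReal_zero]
      exact ENNReal.tendsto_ofReal hreal
    have hfin := ENNReal.Tendsto.sub (tendsto_const_nhds : Tendsto _ atTop (nhds (1:ℝ≥0∞))) h0 (Or.inl ENNReal.one_ne_top)
    rw [tsub_zero] at hfin
    exact hfin
  -- eventual lower bound on the rejection probability
  have hev : ∀ᶠ j in atTop, L j ≤ μ {ω | c (Bk j) < ksStat (p (nk j)) (Bk j) ω} := by
    filter_upwards [hBk.eventually (eventually_ge_atTop N), hnk.eventually hmix]
      with j hjN hjmix
    have hB1 : 1 ≤ Bk j := le_trans (le_max_left _ _) hjN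
    have hcj : c (Bk j) ≤ 2/m := hcB _ hjN
    set ν : Measure ℝ := r.bind (fun θ => (κ (nk j)) θ) with hν
    set q : ℝ := (ν (Set.Iic (w/8))).toReal with hq
    have hq34 : 3*w/4 ≤ q := by
      have hfin : ν (Set.Iic (w/8)) ≠ ⊤ := by
        have : IsProbabilityMeasure (μ.map (p (nk j) 0)) :=
          Measure.isProbabilityMeasure_map (hpmeas (nk j) 0).aemeasurable
        rw [hν, ← hplaw (nk j) 0]
        exact (prob_le_one.trans_lt ENNReal.one_lt_top).ne
      have := ENNReal.toReal_mono hfin hjmix.le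
      rwa [ENNReal.toReal_ofReal (by positivity)] at this
    set A : Set Ω := {ω | δ ≤ |ecdf (p (nk j)) (Bk j) ω (w/8) - q|} with hA
    have hAmeas : MeasurableSet A :=
      measurableSet_le measurable_const
        (((ecdf_measurable (hpmeas (nk j)) (Bk j) _).sub measurable_const).abs)
    have hAle : μ A ≤ ENNReal.ofReal (1 / (Bk j * δ^2)) :=
      ecdf_concentration (hpmeas (nk j)) (hpindep (nk j)) ν (hplaw (nk j)) (w/8) δ hδ0 (Bk j) hB1
    have hsub : Aᶜ ⊆ {ω | c (Bk j) < ksStat (p (nk j)) (Bk j) ω} := by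
      intro ω hω
      simp only [hA, Set.mem_compl_iff, Set.mem_setOf_eq, not_le] at hω
      have hecdf : q - δ < ecdf (p (nk j)) (Bk j) ω (w/8) := by
        have := abs_lt.1 hω
        linarith [this.1]
      have hεIcc : w/8 ∈ Set.Icc (0:ℝ) 1 := ⟨by positivity, by linarith⟩
      have hks : ecdf (p (nk j)) (Bk j) ω (w/8) - w/8 ≤ ksStat (p (nk j)) (Bk j) ω :=
        le_trans (le_abs_self _) (le_ksStat _ _ _ hεIcc)
      simp only [Set.mem_setOf_eq]
      calc c (Bk j) ≤ 2/m := hcj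
        _ ≤ w/4 := h2m
        _ < ecdf (p (nk j)) (Bk j) ω (w/8) - w/8 := by
            rw [hδdef] at hecdf; linarith
        _ ≤ ksStat (p (nk j)) (Bk j) ω := hks
    calc L j = 1 - ENNReal.ofReal (1 / (Bk j * δ^2)) := rfl
      _ ≤ 1 - μ A := tsub_le_tsub_left hAle 1
      _ = μ Aᶜ := by rw [measure_compl hAmeas (measure_ne_top _ _)]; simp
      _ ≤ μ {ω | c (Bk j) < ksStat (p (nk j)) (Bk j) ω} := measure_mono hsub
  exact tendsto_of_tendsto_of_tendsto_of_le_of_le' hLlim tendsto_const_nhds hev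
    (Eventually.of_forall (fun j => prob_le_one))
end

section
/- (Exact uniformity of the Monte-Carlo p-value under the null, used for the goodness-of-fit test via Monte Carlo sampling.) Let T₀, T₁, …, T_M be i.i.d. real-valued random variables with an atomless (continuous) common distribution. Then the p-value p = (1 + #{ 1 ≤ m ≤ M : T_m ≥ T₀ })/(M+1) is uniformly distributed on the set { 1/(M+1), 2/(M+1), …, (M+1)/(M+1) }; in particular, P(p ≤ k/(M+1)) = k/(M+1) for every integer 1 ≤ k ≤ M+1. -/
open MeasureTheory Filter
open scoped ENNReal Classical

noncomputable def strictCount {M : ℕ} (i : Fin (M + 1)) (x : Fin (M + 1) → ℝ) : ℕ :=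
  (Finset.univ.filter (fun m : Fin (M + 1) => m ≠ i ∧ x i < x m)).card

section AuxCount



lemma measurable_strictCount {M : ℕ} (i : Fin (M + 1)) : Measurable (strictCount i) := by
  have h : strictCount i = fun x : Fin (M + 1) → ℝ =>
      ∑ m : Fin (M + 1), if (m ≠ i ∧ x i < x m) then 1 else 0 := by
    funext x; unfold strictCount; rw [Finset.card_filter]
  rw [h]
  refine Finset.measurable_sum _ fun m _ => ?_
  by_cases hmi : m = i
  · simp [hmi]
  · simp only [hmi, Ne, not_false_iff, true_and]
    exact Measurable.ite (measurableSet_lt (measurable_pi_apply i) (measurable_pi_apply m))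
      measurable_const measurable_const

lemma strictCount_le {M : ℕ} (i : Fin (M + 1)) (x : Fin (M + 1) → ℝ) :
    strictCount i x ≤ M := by
  have h : (Finset.univ.filter (fun m : Fin (M + 1) => m ≠ i ∧ x i < x m)) ⊆
      Finset.univ.erase i := by
    intro m hm
    simp only [Finset.mem_filter] at hm
    exact Finset.mem_erase.2 ⟨hm.2.1, Finset.mem_univ m⟩
  have := Finset.card_le_card h
  simpa [strictCount, Finset.card_erase_of_mem] using this

lemma strictCount_swap {M : ℕ} (i : Fin (M + 1)) (x : Fin (M + 1) → ℝ) :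
    strictCount 0 (fun m => x (Equiv.swap (0 : Fin (M + 1)) i m)) = strictCount i x := by
  unfold strictCount
  refine Finset.card_bij (fun m _ => Equiv.swap (0 : Fin (M + 1)) i m) ?_ ?_ ?_
  · intro a ha
    simp only [Finset.mem_filter, Finset.mem_univ, true_and] at ha ⊢
    refine ⟨fun h => ha.1 ?_, ?_⟩
    · have := (Equiv.swap (0 : Fin (M + 1)) i).injective
        (h.trans (Equiv.swap_apply_left (0 : Fin (M + 1)) i).symm)
      exact this
    · simpa [Equiv.swap_apply_left] using ha.2
  · intro a _ b _ hab
    exact (Equiv.swap (0 : Fin (M + 1)) i).injective hab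
  · intro b hb
    simp only [Finset.mem_filter, Finset.mem_univ, true_and] at hb
    refine ⟨Equiv.swap (0 : Fin (M + 1)) i b, ?_, ?_⟩
    · simp only [Finset.mem_filter, Finset.mem_univ, true_and]
      refine ⟨fun h => hb.1 ?_, ?_⟩
      · have h2 := congrArg (Equiv.swap (0 : Fin (M + 1)) i) h
        simpa [Equiv.swap_apply_self, Equiv.swap_apply_left] using h2
      · simpa [Equiv.swap_apply_left, Equiv.swap_apply_self] using hb.2
    · simp [Equiv.swap_apply_self]

lemma strictCount_inj {M : ℕ} {x : Fin (M + 1) → ℝ}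
    (hx : Function.Injective x) : Function.Injective (fun i => strictCount i x) := by
  have key : ∀ i j : Fin (M + 1), x i < x j → strictCount j x < strictCount i x := by
    intro i j hij
    apply Finset.card_lt_card
    have hsub : (Finset.univ.filter (fun m : Fin (M + 1) => m ≠ j ∧ x j < x m)) ⊆
        (Finset.univ.filter (fun m : Fin (M + 1) => m ≠ i ∧ x i < x m)) := by
      intro m hm
      simp only [Finset.mem_filter, Finset.mem_univ, true_and] at hm ⊢
      refine ⟨fun h => ?_, lt_trans hij hm.2⟩
      rw [h] at hm
      exact lt_irrefl _ (lt_trans hij hm.2)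
    rw [Finset.ssubset_iff_of_subset hsub]
    refine ⟨j, ?_, ?_⟩
    · simp only [Finset.mem_filter, Finset.mem_univ, true_and]
      exact ⟨fun h => lt_irrefl _ (h ▸ hij), hij⟩
    · simp only [Finset.mem_filter, Finset.mem_univ, true_and]
      intro h
      exact lt_irrefl _ h.2
  intro i j hij
  by_contra hne
  rcases lt_or_gt_of_ne (fun h : x i = x j => hne (hx h)) with h | h
  · exact absurd hij (by simpa using (key i j h).ne')
  · exact absurd hij (by simpa using (key j i h).ne)

lemma strictCount_surj {M : ℕ} {x : Fin (M + 1) → ℝ}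
    (hx : Function.Injective x) (j : ℕ) (hj : j ≤ M) :
    ∃ i : Fin (M + 1), strictCount i x = j := by
  let F : Fin (M + 1) → Fin (M + 1) := fun i => ⟨strictCount i x, Nat.lt_succ_of_le (strictCount_le i x)⟩
  have hFinj : Function.Injective F := by
    intro a b hab
    exact strictCount_inj hx (by simpa [F, Fin.ext_iff] using hab)
  have hFsurj : Function.Surjective F := Finite.surjective_of_injective hFinj
  obtain ⟨i, hi⟩ := hFsurj ⟨j, Nat.lt_succ_of_le hj⟩
  exact ⟨i, by simpa [F, Fin.ext_iff] using hi⟩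

end AuxCount

section AuxPi

lemma map_perm_eq_pi {Ω : Type*} [MeasurableSpace Ω] (μ : Measure Ω) [IsProbabilityMeasure μ]
    (M : ℕ) (T : Fin (M + 1) → Ω → ℝ) (hmeas : ∀ m, Measurable (T m))
    (hindep : ProbabilityTheory.iIndepFun T μ)
    (hident : ∀ m, μ.map (T m) = μ.map (T 0))
    (σ : Equiv.Perm (Fin (M + 1))) :
    μ.map (fun ω m => T (σ m) ω) = Measure.pi (fun _ => μ.map (T 0)) := by
  haveI : IsProbabilityMeasure (μ.map (T 0)) :=
    Measure.isProbabilityMeasure_map (hmeas 0).aemeasurable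
  have hJ : Measurable (fun ω m => T (σ m) ω) :=
    measurable_pi_lambda _ (fun m => hmeas (σ m))
  refine (Measure.pi_eq (μ := fun _ : Fin (M+1) => μ.map (T 0)) fun s hs => ?_).symm
  rw [Measure.map_apply hJ (MeasurableSet.univ_pi hs)]
  have hpre : (fun ω m => T (σ m) ω) ⁻¹' Set.pi Set.univ s =
      ⋂ m ∈ Finset.univ, T m ⁻¹' s (σ.symm m) := by
    ext ω
    simp only [Set.mem_preimage, Set.mem_pi, Set.mem_univ, forall_true_left,
      Set.mem_iInter, Finset.mem_univ, Set.iInter_true]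
    constructor
    · intro h m
      simpa using h (σ.symm m)
    · intro h m
      simpa using h (σ m)
  rw [hpre, hindep.measure_inter_preimage_eq_mul Finset.univ
    (fun m _ => hs (σ.symm m))]
  have hterm : ∀ m, μ (T m ⁻¹' s (σ.symm m)) = (μ.map (T 0)) (s (σ.symm m)) := by
    intro m
    rw [← hident m, Measure.map_apply (hmeas m) (hs (σ.symm m))]
  calc ∏ m : Fin (M + 1), μ (T m ⁻¹' s (σ.symm m))
      = ∏ m : Fin (M + 1), (μ.map (T 0)) (s (σ.symm m)) := by
        exact Finset.prod_congr rfl fun m _ => hterm m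
    _ = ∏ m : Fin (M + 1), (μ.map (T 0)) (s m) := Equiv.prod_comp σ.symm (fun m => (μ.map (T 0)) (s m))

end AuxPi

/-- The Monte Carlo `p`-value computed from the observed statistic `T 0` and the
reference statistics `T 1, …, T M`:
`p = (1 + #{ 1 ≤ m ≤ M : T m ≥ T 0 }) / (M + 1)`. -/
noncomputable def mcPValue {Ω : Type*} (M : ℕ) (T : Fin (M + 1) → Ω → ℝ) (ω : Ω) : ℝ :=
  (1 + ((Finset.univ.filter (fun m : Fin (M + 1) => m ≠ 0 ∧ T 0 ω ≤ T m ω)).card : ℝ)) /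
    (M + 1)

/-- **Exact uniformity of the Monte Carlo `p`-value under the null** (used in the
goodness-of-fit test via Monte Carlo sampling).  If `T 0, T 1, …, T M` are i.i.d. with
an atomless common distribution, then the Monte Carlo `p`-value is uniformly
distributed on `{1/(M+1), 2/(M+1), …, (M+1)/(M+1)}`; in particular
`P(p ≤ k/(M+1)) = k/(M+1)` for every integer `1 ≤ k ≤ M + 1`. -/
theorem mcPValue_uniform_of_iid_atomless
    {Ω : Type*} [MeasurableSpace Ω] (μ : Measure Ω) [IsProbabilityMeasure μ]
    (M : ℕ) (T : Fin (M + 1) → Ω → ℝ) (hmeas : ∀ m, Measurable (T m))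
    (hindep : ProbabilityTheory.iIndepFun T μ)
    (hident : ∀ m, μ.map (T m) = μ.map (T 0))
    (hatomless : ∀ t : ℝ, μ.map (T 0) {t} = 0) :
    ∀ k : ℕ, 1 ≤ k → k ≤ M + 1 →
      (μ {ω | mcPValue M T ω = k / (M + 1)}).toReal = 1 / (M + 1) ∧
      (μ {ω | mcPValue M T ω ≤ k / (M + 1)}).toReal = k / (M + 1) := by
  haveI : IsProbabilityMeasure (μ.map (T 0)) :=
    Measure.isProbabilityMeasure_map (hmeas 0).aemeasurable
  -- the tie set
  set N : Set Ω := ⋃ (p : Fin (M + 1) × Fin (M + 1)) (_ : p.1 ≠ p.2),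
    {ω | T p.1 ω = T p.2 ω} with hNdef
  have hpair : ∀ m n : Fin (M + 1), m ≠ n → μ {ω | T m ω = T n ω} = 0 := by
    intro m n hmn
    have hind := hindep.indepFun hmn
    have hmap := (ProbabilityTheory.indepFun_iff_map_prod_eq_prod_map_map
        (hmeas m).aemeasurable (hmeas n).aemeasurable).mp hind
    have hdiag : MeasurableSet {p : ℝ × ℝ | p.1 = p.2} :=
      measurableSet_eq_fun measurable_fst measurable_snd
    have h1 : μ {ω | T m ω = T n ω}
        = (μ.map (fun ω => (T m ω, T n ω))) {p : ℝ × ℝ | p.1 = p.2} := by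
      rw [Measure.map_apply ((hmeas m).prodMk (hmeas n)) hdiag]
      rfl
    rw [h1, hmap, hident m, hident n, Measure.prod_apply hdiag]
    have hz : ∀ x : ℝ, (μ.map (T 0)) (Prod.mk x ⁻¹' {p : ℝ × ℝ | p.1 = p.2}) = 0 := by
      intro x
      have hx : Prod.mk x ⁻¹' {p : ℝ × ℝ | p.1 = p.2} = {x} := by
        ext y; simp [eq_comm]
      rw [hx]; exact hatomless x
    simp only [hz, lintegral_zero]
  have hN : μ N = 0 := by
    refine measure_iUnion_null fun p => ?_
    by_cases hp : p.1 = p.2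
    · simp [hp]
    · simpa [hp] using hpair p.1 p.2 hp
  have hNmeas : MeasurableSet N := by
    refine MeasurableSet.iUnion fun p => MeasurableSet.iUnion fun _ => ?_
    exact measurableSet_eq_fun (hmeas p.1) (hmeas p.2)
  have hinj_of_not_mem : ∀ ω, ω ∉ N → Function.Injective (fun m => T m ω) := by
    intro ω hω m n hmn
    by_contra hne
    exact hω (Set.mem_iUnion.2 ⟨(m, n), Set.mem_iUnion.2 ⟨hne, hmn⟩⟩)
  -- the rank events
  set cA : Fin (M + 1) → ℕ → Set Ω :=
    fun i j => {ω | strictCount i (fun m => T m ω) = j} with hcAdef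
  have hcA : ∀ i j, MeasurableSet (cA i j) := by
    intro i j
    exact ((measurable_strictCount i).comp
      (measurable_pi_lambda _ fun m => hmeas m)) (measurableSet_singleton j)
  have hswap : ∀ i j, μ (cA i j) = μ (cA 0 j) := by
    intro i j
    have hS : MeasurableSet {y : Fin (M + 1) → ℝ | strictCount 0 y = j} :=
      measurable_strictCount 0 (measurableSet_singleton j)
    have h1 : cA i j = (fun ω m => T (Equiv.swap (0 : Fin (M + 1)) i m) ω) ⁻¹'
        {y | strictCount 0 y = j} := by
      ext ω
      have hsw := strictCount_swap i (fun m => T m ω)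
      simp only [hcAdef, Set.mem_preimage, Set.mem_setOf_eq]
      rw [← hsw]
    have h2 : cA 0 j = (fun ω m => T (Equiv.refl (Fin (M + 1)) m) ω) ⁻¹'
        {y | strictCount 0 y = j} := rfl
    rw [h1, h2,
      ← Measure.map_apply (measurable_pi_lambda _ fun m => hmeas (Equiv.swap 0 i m)) hS,
      ← Measure.map_apply (measurable_pi_lambda _ fun m => hmeas (Equiv.refl _ m)) hS,
      map_perm_eq_pi μ M T hmeas hindep hident (Equiv.swap 0 i),
      map_perm_eq_pi μ M T hmeas hindep hident (Equiv.refl _)]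
  have hKey : ∀ j : ℕ, j ≤ M → μ (cA 0 j) = (((M : ℝ≥0∞) + 1))⁻¹ := by
    intro j hj
    have hcover : Set.univ ⊆ N ∪ ⋃ i, cA i j := by
      intro ω _
      by_cases hω : ω ∈ N
      · exact Or.inl hω
      · obtain ⟨i, hi⟩ := strictCount_surj (hinj_of_not_mem ω hω) j hj
        exact Or.inr (Set.mem_iUnion.2 ⟨i, hi⟩)
    have hsum_ge : 1 ≤ ∑ i : Fin (M + 1), μ (cA i j) := by
      calc (1 : ℝ≥0∞) = μ Set.univ := measure_univ.symm
        _ ≤ μ (N ∪ ⋃ i, cA i j) := measure_mono hcover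
        _ ≤ μ N + μ (⋃ i, cA i j) := measure_union_le _ _
        _ = μ (⋃ i, cA i j) := by rw [hN, zero_add]
        _ ≤ ∑ i : Fin (M + 1), μ (cA i j) := measure_iUnion_fintype_le _ _
    have hdisj : Pairwise (Function.onFun Disjoint (fun i => cA i j \ N)) := by
      intro a b hab
      refine Set.disjoint_left.2 fun ω hωa hωb => ?_
      have hinj := hinj_of_not_mem ω hωa.2
      exact hab (strictCount_inj hinj (hωa.1.trans hωb.1.symm))
    have hsum_le : ∑ i : Fin (M + 1), μ (cA i j) ≤ 1 := by
      have hdn : ∀ i : Fin (M + 1), μ (cA i j) = μ (cA i j \ N) := fun i =>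
        (measure_diff_null hN).symm
      calc ∑ i : Fin (M + 1), μ (cA i j) = ∑ i : Fin (M + 1), μ (cA i j \ N) :=
            Finset.sum_congr rfl fun i _ => hdn i
        _ = μ (⋃ i, cA i j \ N) := by
            rw [measure_iUnion hdisj fun i => (hcA i j).diff hNmeas, tsum_fintype]
        _ ≤ μ Set.univ := measure_mono (Set.subset_univ _)
        _ = 1 := measure_univ
    have hsum_eq : ∑ i : Fin (M + 1), μ (cA i j) = 1 := le_antisymm hsum_le hsum_ge
    have hconst : ∀ i : Fin (M + 1), μ (cA i j) = μ (cA 0 j) := fun i => hswap i j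
    rw [Finset.sum_congr rfl fun i _ => hconst i, Finset.sum_const, Finset.card_univ,
      Fintype.card_fin, nsmul_eq_mul] at hsum_eq
    have hne : ((M + 1 : ℕ) : ℝ≥0∞) ≠ 0 := by simp
    have htop : ((M + 1 : ℕ) : ℝ≥0∞) ≠ ⊤ := by simp
    have : μ (cA 0 j) = ((M + 1 : ℕ) : ℝ≥0∞)⁻¹ := by
      rw [← one_mul (μ (cA 0 j)), ← ENNReal.inv_mul_cancel hne htop, mul_assoc, hsum_eq, mul_one]
    simpa using this
  -- the (≤)-count
  set c : Ω → ℕ := fun ω =>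
    (Finset.univ.filter (fun m : Fin (M + 1) => m ≠ 0 ∧ T 0 ω ≤ T m ω)).card with hcdef
  have hcmeas : Measurable c := by
    have h : c = fun ω => ∑ m : Fin (M + 1), if (m ≠ 0 ∧ T 0 ω ≤ T m ω) then 1 else 0 := by
      funext ω; exact Finset.card_filter _ _
    rw [h]
    refine Finset.measurable_sum _ fun m _ => ?_
    by_cases hm0 : m = 0
    · simp [hm0]
    · simp only [hm0, Ne, not_false_iff, true_and]
      exact Measurable.ite (measurableSet_le (hmeas 0) (hmeas m))
        measurable_const measurable_const
  have hcforms : ∀ ω, ω ∉ N → c ω = strictCount 0 (fun m => T m ω) := by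
    intro ω hω
    have hinj := hinj_of_not_mem ω hω
    show (Finset.univ.filter (fun m : Fin (M + 1) => m ≠ 0 ∧ T 0 ω ≤ T m ω)).card
      = strictCount 0 (fun m => T m ω)
    unfold strictCount
    congr 1
    refine Finset.filter_congr fun m _ => ?_
    by_cases hm0 : m = 0
    · simp [hm0]
    · simp only [hm0, Ne, not_false_iff, true_and]
      constructor
      · intro h
        refine h.lt_of_ne fun he => hm0 (hinj he).symm
      · exact le_of_lt
  have hcM : ∀ ω, c ω ≤ M := by
    intro ω
    have hsub : (Finset.univ.filter (fun m : Fin (M + 1) => m ≠ 0 ∧ T 0 ω ≤ T m ω)) ⊆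
        Finset.univ.erase 0 := by
      intro m hm
      simp only [Finset.mem_filter] at hm
      exact Finset.mem_erase.2 ⟨hm.2.1, Finset.mem_univ m⟩
    have := Finset.card_le_card hsub
    simpa [hcdef, Finset.card_erase_of_mem] using this
  have hcval : ∀ j : ℕ, j ≤ M → μ {ω | c ω = j} = (((M : ℝ≥0∞) + 1))⁻¹ := by
    intro j hj
    have hset : {ω | c ω = j} \ N = cA 0 j \ N := by
      ext ω
      simp only [Set.mem_diff, Set.mem_setOf_eq, hcAdef]
      constructor
      · rintro ⟨h1, h2⟩; exact ⟨(hcforms ω h2).symm.trans h1, h2⟩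
      · rintro ⟨h1, h2⟩; exact ⟨(hcforms ω h2).trans h1, h2⟩
    calc μ {ω | c ω = j} = μ ({ω | c ω = j} \ N) := (measure_diff_null hN).symm
      _ = μ (cA 0 j \ N) := by rw [hset]
      _ = μ (cA 0 j) := measure_diff_null hN
      _ = (((M : ℝ≥0∞) + 1))⁻¹ := hKey j hj
  -- translate the p-value events
  have hMpos : (0 : ℝ) < (M : ℝ) + 1 := by positivity
  intro k hk1 hk2
  have hEq : {ω | mcPValue M T ω = (k : ℝ) / (M + 1)} = {ω | c ω = k - 1} := by
    ext ω
    simp only [Set.mem_setOf_eq, mcPValue]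
    rw [div_eq_div_iff hMpos.ne' hMpos.ne']
    constructor
    · intro h
      have h' : 1 + (c ω : ℝ) = k := by
        have := mul_right_cancel₀ (ne_of_gt hMpos) h
        exact_mod_cast this
      have : 1 + c ω = k := by exact_mod_cast h'
      omega
    · intro h
      have : 1 + c ω = k := by omega
      rw [show ((Finset.univ.filter (fun m : Fin (M + 1) => m ≠ 0 ∧ T 0 ω ≤ T m ω)).card : ℝ)
          = (c ω : ℝ) from rfl]
      rw [show (1 : ℝ) + (c ω : ℝ) = ((1 + c ω : ℕ) : ℝ) by push_cast; ring, this]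
  have hLe : {ω | mcPValue M T ω ≤ (k : ℝ) / (M + 1)} = ⋃ j ∈ Finset.range k, {ω | c ω = j} := by
    ext ω
    simp only [Set.mem_setOf_eq, mcPValue, Set.mem_iUnion, Finset.mem_range]
    rw [div_le_div_iff_of_pos_right hMpos]
    constructor
    · intro h
      refine ⟨c ω, ?_, rfl⟩
      have h' : 1 + (c ω : ℝ) ≤ k := h
      have : (1 + c ω : ℕ) ≤ k := by exact_mod_cast (by push_cast at h' ⊢; linarith : ((1 + c ω : ℕ) : ℝ) ≤ (k : ℝ))
      omega
    · rintro ⟨j, hj, hcj⟩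
      have : 1 + c ω ≤ k := by omega
      have : ((1 + c ω : ℕ) : ℝ) ≤ (k : ℝ) := by exact_mod_cast this
      push_cast at this
      linarith
  constructor
  · rw [hEq, hcval (k - 1) (by omega)]
    have hcast : ((M : ℝ≥0∞) + 1) = ((M + 1 : ℕ) : ℝ≥0∞) := by push_cast; ring
    rw [hcast, ENNReal.toReal_inv, ENNReal.toReal_natCast]
    push_cast
    ring
  · rw [hLe]
    have hdisj2 : Set.PairwiseDisjoint ↑(Finset.range k) (fun j => {ω | c ω = j}) := by
      intro a ha b hb hab
      refine Set.disjoint_left.2 fun ω hωa hωb => hab ?_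
      exact hωa.symm.trans hωb
    rw [measure_biUnion_finset hdisj2 fun j _ => hcmeas (measurableSet_singleton j)]
    have hterm : ∀ j ∈ Finset.range k, μ {ω | c ω = j} = (((M : ℝ≥0∞) + 1))⁻¹ := by
      intro j hj
      exact hcval j (by simp only [Finset.mem_range] at hj; omega)
    have hcast : ((M : ℝ≥0∞) + 1) = ((M + 1 : ℕ) : ℝ≥0∞) := by push_cast; ring
    rw [Finset.sum_congr rfl hterm, Finset.sum_const, Finset.card_range, nsmul_eq_mul]
    rw [hcast, ENNReal.toReal_mul, ENNReal.toReal_inv, ENNReal.toReal_natCast,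
      ENNReal.toReal_natCast]
    push_cast
    ring
end
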